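/- Let C = ℝ × S¹ be the cylinder (S¹ the circle). Suppose φ : C → C is a local homeomorphism such that there is a compact set K ⊆ C with φ(x) = x for all x ∉ K. Then φ is a homeomorphism of C onto itself; in particular φ is bijective. -/

import Mathlib

theorem stmt5 (φ : ℝ × AddCircle (1 : ℝ) → ℝ × AddCircle (1 : ℝ))
    (hloc : IsLocalHomeomorph φ)
    (K : Set (ℝ × AddCircle (1 : ℝ))) (hK : IsCompact K)
    (hsupp : ∀ x ∉ K, φ x = x) :
    Function.Bijective φ ∧
      ∃ e : (ℝ × AddCircle (1 : ℝ)) ≃ₜ (ℝ × AddCircle (1 : ℝ)), ⇑e = φ := by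
  have hcont : Continuous φ := hloc.continuous
  have hopen : IsOpenMap φ := hloc.isOpenMap
  -- properness
  have hproper : IsProperMap φ := by
    rw [isProperMap_iff_isCompact_preimage]
    refine ⟨hcont, fun L hL => ?_⟩
    refine (hK.union hL).of_isClosed_subset
      (hL.isClosed.preimage hcont) (fun x hx => ?_)
    by_cases hxK : x ∈ K
    · exact Or.inl hxK
    · exact Or.inr (by simpa [hsupp x hxK] using hx)
  have hclosed : IsClosedMap φ := hproper.isClosedMap
  -- surjectivity
  have hsurj : Function.Surjective φ := by
    rw [← Set.range_eq_univ]
    refine IsClopen.eq_univ ⟨hclosed.isClosed_range, hopen.isOpen_range⟩ ⟨φ (0, 0), Set.mem_range_self _⟩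
  -- injectivity
  have hinj : Function.Injective φ := by
    set D : Set (ℝ × AddCircle (1 : ℝ)) := {x | ∃ y, y ≠ x ∧ φ y = φ x} with hD
    have himgK : φ '' D ⊆ φ '' K := by
      rintro z ⟨a, ⟨b, hba, hfb⟩, rfl⟩
      by_cases haK : a ∈ K
      · exact ⟨a, haK, rfl⟩
      · have hbK : b ∈ K := by
          by_contra hbK
          exact hba (by rw [← hsupp b hbK, hfb, hsupp a haK])
        exact ⟨b, hbK, hfb⟩
    have hDopen : IsOpen (φ '' D) := by
      rw [isOpen_iff_forall_mem_open]
      rintro z ⟨a, ⟨b, hba, hfb⟩, rfl⟩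
      obtain ⟨ea, hae, hfa⟩ := hloc a
      obtain ⟨eb, hbe, hfbb⟩ := hloc b
      obtain ⟨Ub, Ua, hUbo, hUao, hbU, haU, hdisj⟩ := t2_separation hba
      refine ⟨φ '' (ea.source ∩ Ua) ∩ φ '' (eb.source ∩ Ub), ?_, ?_, ?_⟩
      · rintro w ⟨⟨a', ⟨ha's, ha'U⟩, rfl⟩, ⟨b', ⟨hb's, hb'U⟩, hfb'⟩⟩
        refine ⟨a', ⟨b', ?_, hfb'⟩, rfl⟩
        rintro rfl
        exact Set.disjoint_left.mp hdisj hb'U ha'U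
      · exact (hopen _ (ea.open_source.inter hUao)).inter
          (hopen _ (eb.open_source.inter hUbo))
      · exact ⟨⟨a, ⟨hae, haU⟩, rfl⟩, ⟨b, ⟨hbe, hbU⟩, hfb⟩⟩
    have hDclosed : IsClosed (φ '' D) := by
      rw [← isOpen_compl_iff, isOpen_iff_forall_mem_open]
      intro z hz
      obtain ⟨x, rfl⟩ := hsurj z
      obtain ⟨e, hxe, hfe⟩ := hloc x
      refine ⟨φ '' e.source \ φ '' e.sourceᶜ, ?_, ?_, ?_⟩
      · rintro w ⟨hw1, hw2⟩ ⟨a, ⟨b, hba, hfb⟩, rfl⟩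
        have ha : a ∈ e.source := by
          by_contra h; exact hw2 ⟨a, h, rfl⟩
        have hb : b ∈ e.source := by
          by_contra h; exact hw2 ⟨b, h, hfb⟩
        exact hba (e.injOn hb ha (by rw [← hfe]; exact hfb))
      · exact (hopen _ e.open_source).sdiff (hclosed _ e.open_source.isClosed_compl)
      · refine ⟨⟨x, hxe, rfl⟩, ?_⟩
        rintro ⟨y, hy, hfy⟩
        have : y ≠ x := fun h => hy (h ▸ hxe)
        exact hz ⟨x, ⟨y, this, hfy⟩, rfl⟩
    -- φ '' D is clopen; if nonempty it is univ, contradicting compactness of φ '' K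
    intro a b hab
    by_contra hne
    have hne' : (φ '' D).Nonempty := ⟨φ a, a, ⟨b, fun h => hne h.symm, hab.symm⟩, rfl⟩
    have huniv : φ '' D = Set.univ := IsClopen.eq_univ ⟨hDclosed, hDopen⟩ hne'
    have : IsCompact (Set.univ : Set (ℝ × AddCircle (1 : ℝ))) :=
      (hK.image hcont).of_isClosed_subset isClosed_univ (huniv ▸ himgK)
    exact NoncompactSpace.noncompact_univ this
  refine ⟨⟨hinj, hsurj⟩, Equiv.toHomeomorphOfContinuousOpen
    (Equiv.ofBijective φ ⟨hinj, hsurj⟩) hcont hopen, rfl⟩
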